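/- arXiv:2111.02763 — 7 statements merged into one kernel-verified Lean document; each statement's English description precedes it below -/
import Mathlib

section
/- If f : ℝᵈ → ℝ is μ-strongly convex, w, x ∈ ℝᵈ, v ∈ ℝᵈ, λ, ε ≥ 0, v − μx + μw ∈ ∂f(w), and (1/(2(1+λμ)²))‖x − y + λv‖² + (λ/(1+λμ))(f(x) − f(w) − ⟨x−w, v⟩ + (μ/2)‖x−w‖²) ≤ ε, then for every z ∈ ℝᵈ, f(z) ≥ f(x) + ⟨v, z−x⟩ + (μ/2)‖x−z‖² − ((1+λμ)/λ)ε; i.e., v is an ((1+λμ)/λ)ε-subgradient of f at x. -/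
open scoped RealInnerProductSpace

theorem iprox_eps_subgradient {d : ℕ}
    (f : EuclideanSpace ℝ (Fin d) → ℝ)
    (SD : EuclideanSpace ℝ (Fin d) → Set (EuclideanSpace ℝ (Fin d)))
    (μ lam ε : ℝ) (hμ : 0 < μ) (hlam : 0 < lam) (hε : 0 ≤ ε)
    (hsc : ∀ p u, u ∈ SD p → ∀ y, f y ≥ f p + ⟪u, y - p⟫ + μ / 2 * ‖y - p‖ ^ 2)
    (x y w v : EuclideanSpace ℝ (Fin d))
    (hmem : v - μ • x + μ • w ∈ SD w)
    (hiprox : 1 / (2 * (1 + lam * μ) ^ 2) * ‖x - y + lam • v‖ ^ 2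
        + lam / (1 + lam * μ) * (f x - f w - ⟪x - w, v⟫ + μ / 2 * ‖x - w‖ ^ 2) ≤ ε) :
    ∀ z, f z ≥ f x + ⟪v, z - x⟫ + μ / 2 * ‖x - z‖ ^ 2 - (1 + lam * μ) / lam * ε := by
  intro z
  have hpos : 0 < 1 + lam * μ := by nlinarith
  have h1 := hsc w _ hmem z
  have hnn : 0 ≤ 1 / (2 * (1 + lam * μ) ^ 2) * ‖x - y + lam • v‖ ^ 2 := by positivity
  have hE : f x - f w - ⟪x - w, v⟫ + μ / 2 * ‖x - w‖ ^ 2 ≤ (1 + lam * μ) / lam * ε := by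
    have h2 : lam / (1 + lam * μ) * (f x - f w - ⟪x - w, v⟫ + μ / 2 * ‖x - w‖ ^ 2) ≤ ε := by
      linarith
    rw [div_mul_eq_mul_div, div_le_iff₀ hpos] at h2
    have hEeq : lam * ((1 + lam * μ) / lam * ε) = ε * (1 + lam * μ) := by
      field_simp
    nlinarith [h2, hEeq]
  have e1 : ⟪v - μ • x + μ • w, z - w⟫ = ⟪v, z - w⟫ - μ * ⟪x - w, z - w⟫ := by
    have hv : v - μ • x + μ • w = v - μ • (x - w) := by
      rw [smul_sub]; abel
    rw [hv, inner_sub_left, real_inner_smul_left]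
  have hx : ‖x - z‖ ^ 2 = ‖x - w‖ ^ 2 - 2 * ⟪x - w, z - w⟫ + ‖z - w‖ ^ 2 := by
    have hxz : x - z = (x - w) - (z - w) := by abel
    rw [hxz, norm_sub_sq_real]
  have e2 : ⟪v, z - x⟫ = ⟪v, z - w⟫ - ⟪v, x - w⟫ := by
    have hzx : z - x = (z - w) - (x - w) := by abel
    rw [hzx, inner_sub_right]
  have e3 : ⟪x - w, v⟫ = ⟪v, x - w⟫ := real_inner_comm _ _
  rw [e1] at h1
  rw [e2, hx]
  nlinarith [h1, hE]
end

section
/- Let f : ℝᵈ → ℝ be μ-strongly convex with minimizer x*. Suppose w, z, z', x ∈ ℝᵈ, v ∈ ℝᵈ, ∇ := v + μ(w − x) ∈ ∂f(w), and given positive reals a, A, A' with A' = A + a and the update z' = ((1+μA)/(1+μA'))z + (μa/(1+μA'))w − (a/(1+μA'))∇. Then ((1+μA)/2)‖z − x*‖² − ((1+μA')/2)‖z' − x*‖² ≥ a(f(w) − f(x*)) + (μa(1+μA)/(2(1+μA')))‖z − w + μ⁻¹∇‖² − (a/(2μ))‖∇‖². -/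
set_option maxHeartbeats 2000000

open scoped RealInnerProductSpace

theorem distance_decrease_lemma {d : ℕ}
    (f : EuclideanSpace ℝ (Fin d) → ℝ)
    (SD : EuclideanSpace ℝ (Fin d) → Set (EuclideanSpace ℝ (Fin d)))
    (μ : ℝ) (hμ : 0 < μ)
    (hsc : ∀ p u, u ∈ SD p → ∀ y, f y ≥ f p + ⟪u, y - p⟫ + μ / 2 * ‖y - p‖ ^ 2)
    (xstar : EuclideanSpace ℝ (Fin d)) (hmin : ∀ y, f xstar ≤ f y)
    (w z z' x v g : EuclideanSpace ℝ (Fin d))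
    (hg : g = v + μ • (w - x)) (hgmem : g ∈ SD w)
    (a A A' : ℝ) (hA : 0 ≤ A) (ha : 0 < a) (hA' : A' = A + a)
    (hz' : z' = ((1 + μ * A) / (1 + μ * A')) • z + (μ * a / (1 + μ * A')) • w
        - (a / (1 + μ * A')) • g) :
    (1 + μ * A) / 2 * ‖z - xstar‖ ^ 2 - (1 + μ * A') / 2 * ‖z' - xstar‖ ^ 2
      ≥ a * (f w - f xstar)
        + μ * a * (1 + μ * A) / (2 * (1 + μ * A')) * ‖z - w + μ⁻¹ • g‖ ^ 2
        - a / (2 * μ) * ‖g‖ ^ 2 := by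
  have hsc' := hsc w g hgmem xstar
  have hτ' : (0:ℝ) < 1 + μ * A' := by nlinarith
  have hμ0 : μ ≠ 0 := ne_of_gt hμ
  have hτ'0 : (1 + μ * A') ≠ 0 := ne_of_gt hτ'
  have key : (1 + μ * A) / 2 * ‖z - xstar‖ ^ 2 - (1 + μ * A') / 2 * ‖z' - xstar‖ ^ 2
      = a * ⟪g, w - xstar⟫ - μ * a / 2 * ‖w - xstar‖ ^ 2
        + μ * a * (1 + μ * A) / (2 * (1 + μ * A')) * ‖z - w + μ⁻¹ • g‖ ^ 2
        - a / (2 * μ) * ‖g‖ ^ 2 := by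
    subst hz' hA'
    simp only [← real_inner_self_eq_norm_sq]
    simp only [inner_add_left, inner_add_right, inner_sub_left, inner_sub_right,
      real_inner_smul_left, real_inner_smul_right]
    rw [real_inner_comm w z, real_inner_comm g z, real_inner_comm g w,
      real_inner_comm xstar z, real_inner_comm xstar w, real_inner_comm xstar g]
    field_simp
    ring
  rw [key]
  have h2 : ⟪g, xstar - w⟫ = - ⟪g, w - xstar⟫ := by
    rw [← inner_neg_right]; congr 1; abel
  have h3 : ‖xstar - w‖ ^ 2 = ‖w - xstar‖ ^ 2 := by rw [norm_sub_rev]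
  have h4 : f w - f xstar ≤ ⟪g, w - xstar⟫ - μ / 2 * ‖w - xstar‖ ^ 2 := by
    rw [h2, h3] at hsc'; linarith
  nlinarith [mul_le_mul_of_nonneg_left h4 ha.le]
end

section
/- Let μ, λ > 0 and A ≥ 0, and define a = ((1+2μA)λ + √((1+2μA)²λ² + 4(1+μA)Aλ))/2. Then a ≥ A·max{μλ, √(μλ)}. -/
theorem a_growth_lower_bound (μ lam A : ℝ) (hμ : 0 < μ) (hlam : 0 < lam) (hA : 0 ≤ A)
    (a : ℝ)
    (ha : a = ((1 + 2 * μ * A) * lam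
        + Real.sqrt ((1 + 2 * μ * A) ^ 2 * lam ^ 2 + 4 * (1 + μ * A) * A * lam)) / 2) :
    a ≥ A * max (μ * lam) (Real.sqrt (μ * lam)) := by
  subst ha
  rw [ge_iff_le, mul_max_of_nonneg _ _ hA]
  set S := (1 + 2 * μ * A) ^ 2 * lam ^ 2 + 4 * (1 + μ * A) * A * lam with hSdef
  have hX : (0:ℝ) ≤ (1 + 2 * μ * A) * lam := by positivity
  have hs1 : (1 + 2 * μ * A) * lam ≤ Real.sqrt S := by
    have h1 : Real.sqrt ((1 + 2 * μ * A) ^ 2 * lam ^ 2) ≤ Real.sqrt S := by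
      apply Real.sqrt_le_sqrt; nlinarith
    have h2 : Real.sqrt ((1 + 2 * μ * A) ^ 2 * lam ^ 2) = (1 + 2 * μ * A) * lam := by
      rw [show (1 + 2 * μ * A) ^ 2 * lam ^ 2 = ((1 + 2 * μ * A) * lam) ^ 2 by ring,
        Real.sqrt_sq hX]
    linarith
  apply max_le
  · nlinarith
  · have h3 : 2 * A * Real.sqrt (μ * lam) = Real.sqrt ((2 * A) ^ 2 * (μ * lam)) := by
      rw [Real.sqrt_mul (by positivity : (0:ℝ) ≤ (2 * A) ^ 2) (μ * lam),
        Real.sqrt_sq (by positivity : (0:ℝ) ≤ 2 * A)]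
    have h4 : Real.sqrt ((2 * A) ^ 2 * (μ * lam)) ≤ Real.sqrt S := by
      apply Real.sqrt_le_sqrt; nlinarith [sq_nonneg ((1 + 2 * μ * A) * lam)]
    nlinarith [Real.sqrt_nonneg S]
end

section
/- Let f : ℝᵈ → ℝ be μ-strongly convex and L-smooth (gradient L-Lipschitz), μ ≤ L. Fix λ > 0 with Lλ(1+μλ) ≤ σ² for some σ ∈ (0,1). Given y ∈ ℝᵈ, set x = y − λ∇f(y) and v = ∇f(y) + μ(x − y). Then (1/(2(1+λμ)²))‖x − y + λv‖² + (λ/(1+λμ))(f(x) − f(y) − ⟨x − y, v⟩ + (μ/2)‖x−y‖²) ≤ (σ²/(2(1+λμ)²))‖x − y‖². -/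
open scoped RealInnerProductSpace

lemma descent_lemma {E : Type*} [NormedAddCommGroup E] [InnerProductSpace ℝ E]
    [CompleteSpace E] (f : E → ℝ) (L : ℝ) (hL : 0 ≤ L)
    (hdiff : Differentiable ℝ f)
    (hsmooth : ∀ a b, ‖gradient f a - gradient f b‖ ≤ L * ‖a - b‖)
    (y x : E) :
    f x - f y - ⟪gradient f y, x - y⟫ ≤ L / 2 * ‖x - y‖ ^ 2 := by
  set u := x - y with hu
  set c : ℝ → E := fun t => y + t • u with hc
  have hcd : ∀ t : ℝ, HasDerivAt c u t := by
    intro t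
    simpa [hc] using ((hasDerivAt_id t).smul_const u).const_add y
  have hφ : ∀ t : ℝ, HasDerivAt (fun s => f (c s)) ⟪gradient f (c t), u⟫ t := by
    intro t
    have h1 := (hdiff (c t)).hasGradientAt.hasFDerivAt
    have h2 := h1.comp_hasDerivAt t (hcd t)
    simp [InnerProductSpace.toDual_apply_apply] at h2 ⊢
    exact h2
  have hgradlip : LipschitzWith (Real.toNNReal L) (gradient f) := by
    apply LipschitzWith.of_dist_le_mul
    intro a b
    rw [dist_eq_norm, dist_eq_norm]
    calc ‖gradient f a - gradient f b‖ ≤ L * ‖a - b‖ := hsmooth a b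
      _ ≤ Real.toNNReal L * ‖a - b‖ := by
          gcongr; exact (Real.le_coe_toNNReal L)
  have hccont : Continuous c := by continuity
  have hcont : Continuous fun t => ⟪gradient f (c t), u⟫ :=
    ((hgradlip.continuous.comp hccont)).inner continuous_const
  have hkey : f x - f y = ∫ t in (0:ℝ)..1, ⟪gradient f (c t), u⟫ := by
    have := intervalIntegral.integral_eq_sub_of_hasDerivAt
      (f := fun s => f (c s)) (fun t _ => hφ t) (hcont.intervalIntegrable 0 1)
    rw [this]
    congr 1 <;> simp [hc, hu]
  have hconst : ⟪gradient f y, u⟫ = ∫ _ in (0:ℝ)..1, ⟪gradient f y, u⟫ := by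
    simp
  have hbound : ∀ t ∈ Set.Icc (0:ℝ) 1,
      ⟪gradient f (c t), u⟫ - ⟪gradient f y, u⟫ ≤ L * t * ‖u‖ ^ 2 := by
    intro t ht
    have h1 : ⟪gradient f (c t) - gradient f y, u⟫ ≤ ‖gradient f (c t) - gradient f y‖ * ‖u‖ :=
      real_inner_le_norm _ _
    have h2 : ‖gradient f (c t) - gradient f y‖ ≤ L * ‖c t - y‖ := hsmooth _ _
    have h3 : ‖c t - y‖ = t * ‖u‖ := by
      simp only [hc, add_sub_cancel_left, norm_smul, Real.norm_eq_abs,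
        abs_of_nonneg ht.1]
    rw [inner_sub_left] at h1
    rw [h3] at h2
    nlinarith [mul_le_mul_of_nonneg_right h2 (norm_nonneg u)]
  have hInt1 : IntervalIntegrable (fun t => ⟪gradient f (c t), u⟫ - ⟪gradient f y, u⟫)
      MeasureTheory.volume 0 1 :=
    (hcont.sub continuous_const).intervalIntegrable 0 1
  have hInt2 : IntervalIntegrable (fun t => L * t * ‖u‖ ^ 2) MeasureTheory.volume 0 1 := by
    apply Continuous.intervalIntegrable; continuity
  have hmono := intervalIntegral.integral_mono_on (by norm_num) hInt1 hInt2 hbound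
  have hI2 : (∫ t in (0:ℝ)..1, L * t * ‖u‖ ^ 2) = L / 2 * ‖u‖ ^ 2 := by
    have : (fun t : ℝ => L * t * ‖u‖ ^ 2) = fun t : ℝ => (L * ‖u‖ ^ 2) * t := by
      funext t; ring
    rw [this, intervalIntegral.integral_const_mul, integral_id]
    ring
  have hI1 : (∫ t in (0:ℝ)..1, (⟪gradient f (c t), u⟫ - ⟪gradient f y, u⟫))
      = f x - f y - ⟪gradient f y, u⟫ := by
    rw [intervalIntegral.integral_sub (hcont.intervalIntegrable 0 1)
      (intervalIntegrable_const), ← hkey]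
    simp
  rw [hI1, hI2] at hmono
  exact hmono

set_option maxHeartbeats 1000000 in
theorem gradient_step_is_iprox {d : ℕ}
    (f : EuclideanSpace ℝ (Fin d) → ℝ)
    (μ L lam σ : ℝ) (hμ : 0 < μ) (hμL : μ ≤ L) (hlam : 0 < lam)
    (hσ : σ ∈ Set.Ioo (0 : ℝ) 1) (hstep : L * lam * (1 + μ * lam) ≤ σ ^ 2)
    (hdiff : Differentiable ℝ f)
    (hsc : ∀ a b, f b ≥ f a + ⟪gradient f a, b - a⟫ + μ / 2 * ‖b - a‖ ^ 2)
    (hsmooth : ∀ a b, ‖gradient f a - gradient f b‖ ≤ L * ‖a - b‖)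
    (y x v : EuclideanSpace ℝ (Fin d))
    (hx : x = y - lam • gradient f y)
    (hv : v = gradient f y + μ • (x - y)) :
    1 / (2 * (1 + lam * μ) ^ 2) * ‖x - y + lam • v‖ ^ 2
      + lam / (1 + lam * μ) * (f x - f y - ⟪x - y, v⟫ + μ / 2 * ‖x - y‖ ^ 2)
      ≤ σ ^ 2 / (2 * (1 + lam * μ) ^ 2) * ‖x - y‖ ^ 2 := by
  have hL : 0 ≤ L := le_trans hμ.le hμL
  have hxy : x - y = (-lam) • gradient f y := by rw [hx]; module
  have hv' : v = (1 - lam * μ) • gradient f y := by rw [hv, hxy]; module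
  have hw : x - y + lam • v = (-(lam ^ 2 * μ)) • gradient f y := by rw [hxy, hv']; module
  have hns : ∀ (r : ℝ) (w : EuclideanSpace ℝ (Fin d)), ‖r • w‖ ^ 2 = r ^ 2 * ‖w‖ ^ 2 := by
    intro r w
    rw [norm_smul, Real.norm_eq_abs, mul_pow, sq_abs]
  have hN0 : (0:ℝ) ≤ ‖gradient f y‖ ^ 2 := sq_nonneg _
  have h1 : ‖x - y + lam • v‖ ^ 2 = (lam ^ 2 * μ) ^ 2 * ‖gradient f y‖ ^ 2 := by
    rw [hw, hns]; ring
  have h2 : ‖x - y‖ ^ 2 = lam ^ 2 * ‖gradient f y‖ ^ 2 := by rw [hxy, hns]; ring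
  have h3 : ⟪x - y, v⟫ = (-lam) * (1 - lam * μ) * ‖gradient f y‖ ^ 2 := by
    rw [hxy, hv', real_inner_smul_left, real_inner_smul_right,
      real_inner_self_eq_norm_sq]
    ring
  have hD : f x - f y ≤ (-lam + L * lam ^ 2 / 2) * ‖gradient f y‖ ^ 2 := by
    have hdl := descent_lemma f L hL hdiff hsmooth y x
    rw [hxy, real_inner_smul_right, real_inner_self_eq_norm_sq, hns] at hdl
    nlinarith [hdl]
  have hA : 0 < 1 + lam * μ := by positivity
  rw [h1, h2, h3, ← sub_nonneg]
  have heq : σ ^ 2 / (2 * (1 + lam * μ) ^ 2) * (lam ^ 2 * ‖gradient f y‖ ^ 2) -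
      (1 / (2 * (1 + lam * μ) ^ 2) * ((lam ^ 2 * μ) ^ 2 * ‖gradient f y‖ ^ 2) +
       lam / (1 + lam * μ) * (f x - f y - -lam * (1 - lam * μ) * ‖gradient f y‖ ^ 2
         + μ / 2 * (lam ^ 2 * ‖gradient f y‖ ^ 2)))
      = (σ ^ 2 * lam ^ 2 * ‖gradient f y‖ ^ 2 - (lam ^ 2 * μ) ^ 2 * ‖gradient f y‖ ^ 2
          - 2 * (1 + lam * μ) * lam * (f x - f y - -lam * (1 - lam * μ) * ‖gradient f y‖ ^ 2
            + μ / 2 * (lam ^ 2 * ‖gradient f y‖ ^ 2)))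
        / (2 * (1 + lam * μ) ^ 2) := by
    field_simp
    ring
  rw [heq]
  apply div_nonneg _ (by positivity)
  nlinarith [mul_le_mul_of_nonneg_left hD (by positivity : (0:ℝ) ≤ 2 * (1 + lam * μ) * lam),
    mul_le_mul_of_nonneg_left hstep (mul_nonneg (sq_nonneg lam) hN0),
    mul_nonneg (mul_nonneg (mul_nonneg (mul_nonneg hlam.le hlam.le) hlam.le) hμ.le) hN0]
end

section
/- Let f : ℝᵈ → ℝ be differentiable, μ-strongly convex and L-smooth, and let λ ∈ (0, 1/L]. Given y ∈ ℝᵈ, let x̃ = y − λ∇f(y) and x = x̃ − λ∇f(x̃). Then ‖(1+μλ)(x − y) + λ∇f(y)‖² ≤ ((L/2)λ(1+μλ) + 1/2)‖x − y‖² + (1+μλ)‖x−y‖² − 2((1+μλ)(1 − Lλ/2) − 1/2)(‖y − x̃‖² + ‖x̃ − x‖²). In particular, if Lλ(1+μλ) ≤ 1/2, then ‖(1+μλ)(x − y) + λ∇f(y)‖² ≤ ((L/2)λ(1+μλ) + 1/2 + (1+μλ))‖x−y‖² − 2((1+μλ)(1−Lλ/2) − 1/2)(‖y−x̃‖² + ‖x̃−x‖²).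 -/
open scoped RealInnerProductSpace

theorem descent_aux' {d : ℕ} (f : EuclideanSpace ℝ (Fin d) → ℝ) (L : ℝ) (hL : 0 ≤ L)
    (hdiff : Differentiable ℝ f)
    (hsmooth : ∀ a b, ‖gradient f a - gradient f b‖ ≤ L * ‖a - b‖)
    (a b : EuclideanSpace ℝ (Fin d)) :
    f b ≤ f a + ⟪gradient f a, b - a⟫ + L / 2 * ‖b - a‖ ^ 2 := by
  set v := b - a with hv
  set ψ : ℝ → ℝ := fun t => f (a + t • v) - t * ⟪gradient f a, v⟫ - L / 2 * t ^ 2 * ‖v‖ ^ 2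
    with hψ
  have hderiv : ∀ t : ℝ, HasDerivAt ψ
      (⟪gradient f (a + t • v), v⟫ - ⟪gradient f a, v⟫ - L * t * ‖v‖ ^ 2) t := by
    intro t
    have hc : HasDerivAt (fun t : ℝ => a + t • v) v t := by
      simpa using ((hasDerivAt_id t).smul_const v).const_add a
    have h1 : HasDerivAt (fun t : ℝ => f (a + t • v)) (⟪gradient f (a + t • v), v⟫) t := by
      have hf := ((hdiff (a + t • v)).hasGradientAt).hasFDerivAt
      exact (hf.comp_hasDerivAt t hc).congr_deriv (by simp [InnerProductSpace.toDual_apply_apply])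
    have h2 : HasDerivAt (fun t : ℝ => t * ⟪gradient f a, v⟫) (⟪gradient f a, v⟫) t := by
      simpa using (hasDerivAt_id t).mul_const (⟪gradient f a, v⟫)
    have h3 : HasDerivAt (fun t : ℝ => L / 2 * t ^ 2 * ‖v‖ ^ 2) (L * t * ‖v‖ ^ 2) t := by
      have := ((hasDerivAt_pow 2 t).const_mul (L / 2)).mul_const (‖v‖ ^ 2)
      exact this.congr_deriv (by push_cast; ring)
    exact (h1.sub h2).sub h3
  have hdiffψ : Differentiable ℝ ψ := fun t => (hderiv t).differentiableAt
  have hanti : AntitoneOn ψ (Set.Icc (0 : ℝ) 1) := by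
    apply antitoneOn_of_deriv_nonpos (convex_Icc 0 1) hdiffψ.continuous.continuousOn
      (fun t _ => (hdiffψ t).differentiableWithinAt)
    intro t ht
    rw [interior_Icc] at ht
    rw [(hderiv t).deriv]
    have hin : ⟪gradient f (a + t • v) - gradient f a, v⟫ ≤ L * t * ‖v‖ ^ 2 := by
      calc ⟪gradient f (a + t • v) - gradient f a, v⟫
          ≤ ‖gradient f (a + t • v) - gradient f a‖ * ‖v‖ := real_inner_le_norm _ _
        _ ≤ (L * ‖(a + t • v) - a‖) * ‖v‖ := by
            gcongr; exact hsmooth _ _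
        _ = L * t * ‖v‖ ^ 2 := by
            have : (a + t • v) - a = t • v := by abel
            rw [this, norm_smul, Real.norm_eq_abs, abs_of_pos ht.1]
            ring
    rw [inner_sub_left] at hin
    linarith
  have hkey := hanti (Set.left_mem_Icc.mpr zero_le_one) (Set.right_mem_Icc.mpr zero_le_one)
    zero_le_one
  have h0 : ψ 0 = f a := by simp [hψ]
  have h1 : ψ 1 = f b - ⟪gradient f a, v⟫ - L / 2 * ‖v‖ ^ 2 := by
    simp [hψ, hv]
  rw [h0, h1] at hkey
  linarith
set_option maxHeartbeats 1000000 in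
theorem two_gradient_steps_bound {d : ℕ}
    (f : EuclideanSpace ℝ (Fin d) → ℝ)
    (μ L lam : ℝ) (hμ : 0 < μ) (hL : 0 < L)
    (hlam : lam ∈ Set.Ioc (0 : ℝ) (1 / L))
    (hdiff : Differentiable ℝ f)
    (hsc : ∀ a b, f b ≥ f a + ⟪gradient f a, b - a⟫ + μ / 2 * ‖b - a‖ ^ 2)
    (hsmooth : ∀ a b, ‖gradient f a - gradient f b‖ ≤ L * ‖a - b‖)
    (y xt x : EuclideanSpace ℝ (Fin d))
    (hxt : xt = y - lam • gradient f y)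
    (hx : x = xt - lam • gradient f xt) :
    ‖(1 + μ * lam) • (x - y) + lam • gradient f y‖ ^ 2
        ≤ (L / 2 * lam * (1 + μ * lam) + 1 / 2) * ‖x - y‖ ^ 2
          + (1 + μ * lam) * ‖x - y‖ ^ 2
          - 2 * ((1 + μ * lam) * (1 - L * lam / 2) - 1 / 2) * (‖y - xt‖ ^ 2 + ‖xt - x‖ ^ 2)
      ∧ (L * lam * (1 + μ * lam) ≤ 1 / 2 →
          ‖(1 + μ * lam) • (x - y) + lam • gradient f y‖ ^ 2
            ≤ (L / 2 * lam * (1 + μ * lam) + 1 / 2 + (1 + μ * lam)) * ‖x - y‖ ^ 2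
              - 2 * ((1 + μ * lam) * (1 - L * lam / 2) - 1 / 2)
                  * (‖y - xt‖ ^ 2 + ‖xt - x‖ ^ 2)) := by
  obtain ⟨hlam0, _⟩ := hlam
  set g := gradient f y with hg
  set gt := gradient f xt with hgt
  have hxty : xt - y = -(lam • g) := by rw [hxt]; abel
  have hxxt : x - xt = -(lam • gt) := by rw [hx]; abel
  have h5 : ‖y - xt‖ ^ 2 = lam ^ 2 * ‖g‖ ^ 2 := by
    have : y - xt = lam • g := by rw [hxt]; abel
    rw [this, norm_smul, Real.norm_eq_abs, mul_pow, sq_abs]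
  have h6 : ‖xt - x‖ ^ 2 = lam ^ 2 * ‖gt‖ ^ 2 := by
    have : xt - x = lam • gt := by rw [hx]; abel
    rw [this, norm_smul, Real.norm_eq_abs, mul_pow, sq_abs]
  have h1 : ‖(1 + μ * lam) • (x - y) + lam • g‖ ^ 2
      = (1 + μ * lam) ^ 2 * ‖x - y‖ ^ 2 + 2 * ((1 + μ * lam) * lam) * ⟪x - y, g⟫
        + lam ^ 2 * ‖g‖ ^ 2 := by
    rw [norm_add_sq_real, real_inner_smul_left, real_inner_smul_right, norm_smul, norm_smul,
      Real.norm_eq_abs, Real.norm_eq_abs, mul_pow, mul_pow, sq_abs, sq_abs]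
    ring
  have h2' : ⟪x - y, g⟫ ≤ f x - f y - μ / 2 * ‖x - y‖ ^ 2 := by
    have h2 := hsc y x
    rw [real_inner_comm]
    linarith
  have d1 : f xt - f y ≤ -(lam * ‖g‖ ^ 2) + L / 2 * (lam ^ 2 * ‖g‖ ^ 2) := by
    have := descent_aux' f L hL.le hdiff hsmooth y xt
    rw [hxty, inner_neg_right, real_inner_smul_right, real_inner_self_eq_norm_sq,
      norm_neg, norm_smul, Real.norm_eq_abs, mul_pow, sq_abs] at this
    rw [← hg] at this
    linarith
  have d2 : f x - f xt ≤ -(lam * ‖gt‖ ^ 2) + L / 2 * (lam ^ 2 * ‖gt‖ ^ 2) := by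
    have := descent_aux' f L hL.le hdiff hsmooth xt x
    rw [hxxt, inner_neg_right, real_inner_smul_right, real_inner_self_eq_norm_sq,
      norm_neg, norm_smul, Real.norm_eq_abs, mul_pow, sq_abs] at this
    rw [← hgt] at this
    linarith
  have k2 : 2 * ((1 + μ * lam) * lam) * ⟪x - y, g⟫
      ≤ 2 * ((1 + μ * lam) * lam) * (f x - f y - μ / 2 * ‖x - y‖ ^ 2) :=
    mul_le_mul_of_nonneg_left h2' (by positivity)
  have k3 : f x - f y ≤ -(lam * (‖g‖ ^ 2 + ‖gt‖ ^ 2))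
      + L / 2 * (lam ^ 2 * (‖g‖ ^ 2 + ‖gt‖ ^ 2)) := by linarith
  have k4 : 2 * ((1 + μ * lam) * lam) * (f x - f y)
      ≤ 2 * ((1 + μ * lam) * lam) * (-(lam * (‖g‖ ^ 2 + ‖gt‖ ^ 2))
        + L / 2 * (lam ^ 2 * (‖g‖ ^ 2 + ‖gt‖ ^ 2))) :=
    mul_le_mul_of_nonneg_left k3 (by positivity)
  have t1 : (0 : ℝ) ≤ (L / 2 * lam * (1 + μ * lam) + 1 / 2) * ‖x - y‖ ^ 2 := by positivity
  have t2 : (0 : ℝ) ≤ lam ^ 2 * ‖gt‖ ^ 2 := by positivity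
  have hmain : ‖(1 + μ * lam) • (x - y) + lam • g‖ ^ 2
      ≤ (L / 2 * lam * (1 + μ * lam) + 1 / 2) * ‖x - y‖ ^ 2
        + (1 + μ * lam) * ‖x - y‖ ^ 2
        - 2 * ((1 + μ * lam) * (1 - L * lam / 2) - 1 / 2)
            * (‖y - xt‖ ^ 2 + ‖xt - x‖ ^ 2) := by
    rw [h5, h6]
    linarith [h1, k2, k4, t1, t2]
  exact ⟨hmain, fun _ => by rw [h5, h6] at hmain ⊢; linarith⟩
end

section
/- Let c ∈ (0,1) and δ ≥ 1 with δ ≤ 1 + (1/9)ξ*, where ξ* = (9/10)√c. If ξ ≥ ξ* and ξ' ∈ (0,1) satisfies δξ'(ξ' − c) = ξ²(1 − ξ'), then ξ' ≥ ξ*. -/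
set_option maxHeartbeats 1600000 in
theorem xi_induction_step (c δ ξ ξ' : ℝ) (hc : c ∈ Set.Ioo (0 : ℝ) 1) (hδ1 : 1 ≤ δ)
    (hδ2 : δ ≤ 1 + 1 / 9 * (9 / 10 * Real.sqrt c))
    (hξ : 9 / 10 * Real.sqrt c ≤ ξ) (hξ' : ξ' ∈ Set.Ioo (0 : ℝ) 1)
    (hrec : δ * ξ' * (ξ' - c) = ξ ^ 2 * (1 - ξ')) :
    9 / 10 * Real.sqrt c ≤ ξ' := by
  obtain ⟨hc0, hc1⟩ := hc
  obtain ⟨hξ'0, hξ'1⟩ := hξ'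
  set s := Real.sqrt c with hs
  have hs0 : 0 < s := Real.sqrt_pos.mpr hc0
  have hs2 : s ^ 2 = c := Real.sq_sqrt hc0.le
  have hs1 : s < 1 := by
    rw [hs, show (1:ℝ) = Real.sqrt 1 by simp]
    exact Real.sqrt_lt_sqrt hc0.le hc1
  have hξ0 : 0 < ξ := lt_of_lt_of_le (by positivity) hξ
  have hδ0 : 0 < δ := lt_of_lt_of_le one_pos hδ1
  have hrhs : 0 < ξ ^ 2 * (1 - ξ') :=
    mul_pos (pow_pos hξ0 2) (sub_pos.mpr hξ'1)
  have hcξ' : c < ξ' := by nlinarith [mul_pos hδ0 hξ'0]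
  set t : ℝ := 9 / 10 * s with ht
  have ht0 : 0 < t := by positivity
  have ht1 : t < 1 := by nlinarith
  -- key inequality : f(t) ≤ 0
  have hA : δ * t * (t - c) ≤ ξ ^ 2 * (1 - t) := by
    have hξ2 : t ^ 2 * (1 - t) ≤ ξ ^ 2 * (1 - t) := by
      have : t ^ 2 ≤ ξ ^ 2 := by nlinarith
      nlinarith
    have hB : δ * (t - c) ≤ t * (1 - t) := by
      rcases le_or_gt c t with hct | hct
      · nlinarith [mul_nonneg (sub_nonneg.mpr hδ1) (sub_nonneg.mpr hct)]
      · nlinarith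
    have h1 := mul_le_mul_of_nonneg_left hB ht0.le
    have h2 : t * (δ * (t - c)) = δ * t * (t - c) := by ring
    have h3 : t * (t * (1 - t)) = t ^ 2 * (1 - t) := by ring
    linarith
  by_contra h
  push_neg at h
  -- f(t) > f(ξ') = 0 since factor positive
  have hfact : 0 < (t - ξ') * (δ * (t + ξ' - c) + ξ ^ 2) := by
    apply mul_pos (sub_pos.mpr h)
    have h4 : 0 < t + ξ' - c := by linarith
    have h5 := mul_pos hδ0 h4
    have h6 := pow_pos hξ0 2
    linarith
  have heq : (t - ξ') * (δ * (t + ξ' - c) + ξ ^ 2)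
      = (δ * t * (t - c) - ξ ^ 2 * (1 - t)) - (δ * ξ' * (ξ' - c) - ξ ^ 2 * (1 - ξ')) := by
    ring
  linarith [hfact, hA]
end

section
/- Let μ, λ > 0 and let sequences A_k, B_k > 0 satisfy B_{k+1} = B_k/(θ_k δ_k), a_{k+1} = (2/μ)(1−θ_k)B_{k+1}, A_{k+1} = A_k + a_{k+1}, where θ_k is the smaller root of B_k(1−θ)² = μλθ((1−θ)B_k + (μ/2)δ_k A_k) and δ_k > 0. Then for all k ≥ 0, (1+μλ)a_{k+1}² = 2λ A_{k+1} B_{k+1}; equivalently B_{k+1}/A_{k+1} = ((1+μλ)/(2λ))(a_{k+1}/A_{k+1})². -/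
theorem riemannian_parameter_identity (μ lam : ℝ) (hμ : 0 < μ) (hlam : 0 < lam)
    (A B a θ δ : ℕ → ℝ)
    (hA : ∀ k, 0 < A k) (hB : ∀ k, 0 < B k) (hδ : ∀ k, 0 < δ k)
    (hθ : ∀ k, θ k ∈ Set.Ioo (0 : ℝ) 1)
    (hθroot : ∀ k, B k * (1 - θ k) ^ 2
        = μ * lam * θ k * ((1 - θ k) * B k + μ / 2 * δ k * A k))
    (hθsmall : ∀ (k : ℕ) (t : ℝ), B k * (1 - t) ^ 2
        = μ * lam * t * ((1 - t) * B k + μ / 2 * δ k * A k) → θ k ≤ t)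
    (hBrec : ∀ k, B (k + 1) = B k / (θ k * δ k))
    (harec : ∀ k, a (k + 1) = 2 / μ * (1 - θ k) * B (k + 1))
    (hArec : ∀ k, A (k + 1) = A k + a (k + 1)) :
    ∀ k, (1 + μ * lam) * a (k + 1) ^ 2 = 2 * lam * A (k + 1) * B (k + 1)
      ∧ B (k + 1) / A (k + 1) = (1 + μ * lam) / (2 * lam) * (a (k + 1) / A (k + 1)) ^ 2 := by
  intro k
  obtain ⟨ht0, ht1⟩ := hθ k
  have hδk := hδ k
  have hAk := hA k
  have hBk := hB k
  have htne : θ k ≠ 0 := ne_of_gt ht0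
  have hδne : δ k ≠ 0 := ne_of_gt hδk
  have hμne : μ ≠ 0 := ne_of_gt hμ
  have hB1 : B (k + 1) = B k / (θ k * δ k) := hBrec k
  have ha1 : a (k + 1) = 2 / μ * (1 - θ k) * B (k + 1) := harec k
  have hA1 : A (k + 1) = A k + a (k + 1) := hArec k
  have hroot := hθroot k
  have h1 : (1 + μ * lam) * a (k + 1) ^ 2 = 2 * lam * A (k + 1) * B (k + 1) := by
    rw [hA1, ha1, hB1]
    field_simp
    linear_combination 2 * hroot
  refine ⟨h1, ?_⟩
  have hA1pos : 0 < A (k + 1) := by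
    have ha1pos : 0 < a (k + 1) := by
      rw [ha1, hB1]
      have h1t : (0:ℝ) < 1 - θ k := by linarith
      have hbd : 0 < B k / (θ k * δ k) := div_pos hBk (mul_pos ht0 hδk)
      exact mul_pos (mul_pos (by positivity) h1t) hbd
    rw [hA1]; linarith
  have hA1ne : A (k + 1) ≠ 0 := ne_of_gt hA1pos
  field_simp
  linear_combination (-1) * h1
end
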